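/- Let n be a positive integer and let y₁, y₂, y₃, y₄ be pairwise distinct elements of ZMod n. Set z₁ := min(d(y₁,y₂), d(y₂,y₁)) and z₃ := min(d(y₃,y₄), d(y₄,y₃)). Suppose that either (d(y₃,y₁) ≤ d(y₃,y₄) and d(y₄,y₂) ≤ d(y₄,y₃)) or (d(y₃,y₂) ≤ d(y₃,y₄) and d(y₄,y₁) ≤ d(y₄,y₃)) (i.e., y₁ and y₂ lie on different arcs determined by y₃ and y₄). Then 4·(f(y₁,y₃) + f(y₁,y₄) + f(y₂,y₃) + f(y₂,y₄)) ≥ 16·⌊n/2⌋·⌊(n−1)/2⌋ + z₁² + (n−z₁)² + z₃² + (n−z₃)² − 2·Δ_n. -/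
import Mathlib


/-- `C2 x` is the binomial-type expression `x(x-1)/2`. -/
def C2 (x : ℤ) : ℤ := x * (x - 1) / 2

/-- `dz x y` is the least nonnegative residue of `y - x` modulo `n`. -/
def dz {n : ℕ} (x y : ZMod n) : ℕ := (y - x).val

/-- `fz x y = C(d(x,y),2) + C(n - d(x,y),2)` for `x y : ZMod n`. -/
def fz {n : ℕ} (x y : ZMod n) : ℤ := C2 (dz x y) + C2 ((n : ℤ) - dz x y)

/-- `Δ k = 1` if `k` is odd and `0` if `k` is even. -/
def Δ (k : ℕ) : ℤ := if Odd k then 1 else 0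

lemma two_C2 (x : ℤ) : 2 * C2 x = x * (x - 1) := by
  have h : Even ((x - 1) * (x - 1 + 1)) := Int.even_mul_succ_self (x - 1)
  have h2 : Even (x * (x - 1)) := by
    rw [sub_add_cancel, mul_comm] at h; exact h
  unfold C2
  exact Int.two_mul_ediv_two_of_even h2

lemma int_sq_one_le (x : ℤ) (h : x ≠ 0) : 1 ≤ x ^ 2 := by
  have h1 : 1 ≤ |x| := Int.one_le_abs h
  nlinarith [abs_nonneg x, sq_abs x]

set_option maxHeartbeats 1600000 in
lemma key (n : ℕ) (hn : 0 < n) (y₁ y₂ y₃ y₄ : ZMod n)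
    (h12 : y₁ ≠ y₂) (h13 : y₁ ≠ y₃) (h14 : y₁ ≠ y₄)
    (h23 : y₂ ≠ y₃) (h24 : y₂ ≠ y₄) (h34 : y₃ ≠ y₄)
    (z₁ z₃ : ℕ) (hz₁ : z₁ = min (dz y₁ y₂) (dz y₂ y₁))
    (hz₃ : z₃ = min (dz y₃ y₄) (dz y₄ y₃))
    (ha : dz y₃ y₁ ≤ dz y₃ y₄) (hc : dz y₄ y₂ ≤ dz y₄ y₃) :
    16 * (((n / 2 : ℕ) : ℤ) * (((n - 1) / 2 : ℕ) : ℤ)) + (z₁ : ℤ) ^ 2 + ((n : ℤ) - z₁) ^ 2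
        + (z₃ : ℤ) ^ 2 + ((n : ℤ) - z₃) ^ 2 - 2 * Δ n ≤
      4 * (fz y₁ y₃ + fz y₁ y₄ + fz y₂ y₃ + fz y₂ y₄) := by
  haveI : NeZero n := ⟨hn.ne'⟩
  -- basic lemmas about dz
  have dzadd : ∀ x y : ZMod n, x ≠ y → dz x y + dz y x = n := by
    intro x y h
    have h0 : y - x ≠ 0 := sub_ne_zero.mpr h.symm
    haveI : NeZero (y - x) := ⟨h0⟩
    have hneg := ZMod.val_neg_of_ne_zero (y - x)
    have hlt : (y - x).val < n := ZMod.val_lt _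
    have hne : (y - x).val ≠ 0 := fun hz => h0 ((ZMod.val_eq_zero _).1 hz)
    show (y - x).val + (x - y).val = n
    rw [show x - y = -(y - x) by ring, hneg]
    omega
  have dztri : ∀ x y z : ZMod n, dz x z = (dz x y + dz y z) % n := by
    intro x y z
    show (z - x).val = ((y - x).val + (z - y).val) % n
    rw [show z - x = (y - x) + (z - y) by ring, ZMod.val_add]
  have dzne : ∀ x y z : ZMod n, y ≠ z → dz x y ≠ dz x z := by
    intro x y z h hval
    apply h
    have h2 : y - x = z - x := ZMod.val_injective n hval
    exact sub_left_inj.mp h2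
  have dzne0 : ∀ x y : ZMod n, x ≠ y → dz x y ≠ 0 := by
    intro x y h hz
    exact h.symm (sub_eq_zero.mp ((ZMod.val_eq_zero _).1 hz))
  have dzlt : ∀ x y : ZMod n, dz x y < n := fun x y => ZMod.val_lt _
  -- name the basic quantities
  have hA : dz y₃ y₁ + dz y₁ y₃ = n := dzadd _ _ (Ne.symm h13)
  have hD : dz y₃ y₄ + dz y₄ y₃ = n := dzadd _ _ h34
  have hC : dz y₄ y₂ + dz y₂ y₄ = n := dzadd _ _ (Ne.symm h24)
  have haD : dz y₃ y₁ < dz y₃ y₄ := lt_of_le_of_ne ha (dzne y₃ y₁ y₄ h14)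
  have hcD : dz y₄ y₂ < dz y₄ y₃ := lt_of_le_of_ne hc (dzne y₄ y₂ y₃ h23)
  have hapos : 0 < dz y₃ y₁ := Nat.pos_of_ne_zero (dzne0 _ _ (Ne.symm h13))
  have hcpos : 0 < dz y₄ y₂ := Nat.pos_of_ne_zero (dzne0 _ _ (Ne.symm h24))
  set a := dz y₃ y₁ with hadef
  set D := dz y₃ y₄ with hDdef
  set c := dz y₄ y₂ with hcdef
  have hDlt : D < n := dzlt _ _
  have h43 : dz y₄ y₃ = n - D := by omega
  have h13v : dz y₁ y₃ = n - a := by omega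
  have h24v : dz y₂ y₄ = n - c := by omega
  have hDc : D + c < n := by omega
  have h14v : dz y₁ y₄ = D - a := by
    rw [dztri y₁ y₃ y₄, h13v, show n - a + D = n + (D - a) by omega,
      Nat.add_mod_left]
    exact Nat.mod_eq_of_lt (by omega)
  have h32v : dz y₃ y₂ = D + c := by
    rw [dztri y₃ y₄ y₂]
    exact Nat.mod_eq_of_lt (by omega)
  have h23v : dz y₂ y₃ = n - (D + c) := by
    have := dzadd y₃ y₂ (Ne.symm h23)
    omega
  have h12v : dz y₁ y₂ = D - a + c := by
    rw [dztri y₁ y₄ y₂, h14v]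
    exact Nat.mod_eq_of_lt (by omega)
  have h21v : dz y₂ y₁ = n - (D - a + c) := by
    have := dzadd y₁ y₂ h12
    omega
  -- integer versions
  set N := (n : ℤ) with hNdef
  set A := (a : ℤ) with hAdef
  set B := (D : ℤ) with hBdef
  set C := (c : ℤ) with hCdef
  have hAB : 1 ≤ A ∧ A + 1 ≤ B ∧ 1 ≤ C ∧ B + C + 1 ≤ N := by
    refine ⟨?_, ?_, ?_, ?_⟩ <;> omega
  -- the four fz values, doubled
  have hc13 : ((dz y₁ y₃ : ℕ) : ℤ) = N - A := by rw [h13v]; omega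
  have hc14 : ((dz y₁ y₄ : ℕ) : ℤ) = B - A := by rw [h14v]; omega
  have hc23 : ((dz y₂ y₃ : ℕ) : ℤ) = N - (B + C) := by rw [h23v]; omega
  have hc24 : ((dz y₂ y₄ : ℕ) : ℤ) = N - C := by rw [h24v]; omega
  have hf13 : 2 * fz y₁ y₃ = (N - A) * (N - A - 1) + A * (A - 1) := by
    show 2 * (C2 _ + C2 _) = _
    rw [hc13, mul_add, two_C2, two_C2]
    try ring
  have hf14 : 2 * fz y₁ y₄ = (B - A) * (B - A - 1) + (N - (B - A)) * (N - (B - A) - 1) := by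
    show 2 * (C2 _ + C2 _) = _
    rw [hc14, mul_add, two_C2, two_C2]
    try ring
  have hf23 : 2 * fz y₂ y₃ = (N - (B + C)) * (N - (B + C) - 1) + (B + C) * (B + C - 1) := by
    show 2 * (C2 _ + C2 _) = _
    rw [hc23, mul_add, two_C2, two_C2]
    try ring
  have hf24 : 2 * fz y₂ y₄ = (N - C) * (N - C - 1) + C * (C - 1) := by
    show 2 * (C2 _ + C2 _) = _
    rw [hc24, mul_add, two_C2, two_C2]
    try ring
  -- squares of z₁, z₃
  have hz3c : (z₃ : ℤ) = B ∨ (z₃ : ℤ) = N - B := by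
    rcases min_cases (dz y₃ y₄) (dz y₄ y₃) with ⟨h, _⟩ | ⟨h, _⟩
    · left; rw [hz₃, h]
    · right; rw [hz₃, h, h43]; omega
  have hz3sq : (z₃ : ℤ) ^ 2 + (N - z₃) ^ 2 = B ^ 2 + (N - B) ^ 2 := by
    rcases hz3c with h | h <;> rw [h] <;> ring
  have hz1c : (z₁ : ℤ) = B - A + C ∨ (z₁ : ℤ) = N - (B - A + C) := by
    rcases min_cases (dz y₁ y₂) (dz y₂ y₁) with ⟨h, _⟩ | ⟨h, _⟩
    · left; rw [hz₁, h, h12v]; omega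
    · right; rw [hz₁, h, h21v]; omega
  have hz1sq : (z₁ : ℤ) ^ 2 + (N - z₁) ^ 2 = (B - A + C) ^ 2 + (N - (B - A + C)) ^ 2 := by
    rcases hz1c with h | h <;> rw [h] <;> ring
  obtain ⟨hA1, hAB1, hC1, hBCN⟩ := hAB
  rcases Nat.even_or_odd n with ⟨m, hm⟩ | ⟨m, hm⟩
  · -- even case
    have hq1 : (n / 2 : ℕ) = m := by omega
    have hq2 : ((n - 1) / 2 : ℕ) = m - 1 := by omega
    have hm2 : 2 ≤ m := by omega
    have hq1' : ((n / 2 : ℕ) : ℤ) = (m : ℤ) := by omega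
    have hq2' : (((n - 1) / 2 : ℕ) : ℤ) = (m : ℤ) - 1 := by omega
    have hΔ : Δ n = 0 := by
      have hno : ¬ Odd n := by simp [Nat.odd_iff]; omega
      simp [Δ, hno]
    have hNm : N = 2 * (m : ℤ) := by omega
    have hqq : 16 * ((m : ℤ) * ((m : ℤ) - 1)) = 4 * N ^ 2 - 8 * N := by rw [hNm]; ring
    rw [hq1', hq2', hΔ]
    linarith [hqq, sq_nonneg (2 * A - B), sq_nonneg (2 * C - (N - B)),
      sq_nonneg (2 * A + 2 * C - N), sq_nonneg (N - 2 * B), hf13, hf14, hf23, hf24,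
      hz1sq, hz3sq]
  · -- odd case
    have hq1 : (n / 2 : ℕ) = m := by omega
    have hq2 : ((n - 1) / 2 : ℕ) = m := by omega
    have hq1' : ((n / 2 : ℕ) : ℤ) = (m : ℤ) := by omega
    have hq2' : (((n - 1) / 2 : ℕ) : ℤ) = (m : ℤ) := by omega
    have hΔ : Δ n = 1 := by
      have hyes : Odd n := ⟨m, by omega⟩
      simp [Δ, hyes]
    have hNm : N = 2 * (m : ℤ) + 1 := by omega
    have hqq : 16 * ((m : ℤ) * (m : ℤ)) = 4 * N ^ 2 - 8 * N + 4 := by rw [hNm]; ring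
    have h1 : 1 ≤ (2 * A + 2 * C - N) ^ 2 := int_sq_one_le _ (by omega)
    have h3 : 1 ≤ (N - 2 * B) ^ 2 := int_sq_one_le _ (by omega)
    have h2 : 1 ≤ (2 * A - B) ^ 2 + (2 * C - (N - B)) ^ 2 := by
      have hor : 2 * A - B ≠ 0 ∨ 2 * C - (N - B) ≠ 0 := by omega
      rcases hor with h | h
      · linarith [int_sq_one_le _ h, sq_nonneg (2 * C - (N - B))]
      · linarith [int_sq_one_le _ h, sq_nonneg (2 * A - B)]
    rw [hq1', hq2', hΔ]
    linarith [hqq, sq_nonneg (2 * A - B), sq_nonneg (2 * C - (N - B)),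
      h1, h2, h3, hf13, hf14, hf23, hf24, hz1sq, hz3sq]

theorem stmt_11 (n : ℕ) (hn : 0 < n) (y₁ y₂ y₃ y₄ : ZMod n)
    (h12 : y₁ ≠ y₂) (h13 : y₁ ≠ y₃) (h14 : y₁ ≠ y₄)
    (h23 : y₂ ≠ y₃) (h24 : y₂ ≠ y₄) (h34 : y₃ ≠ y₄)
    (z₁ z₃ : ℕ) (hz₁ : z₁ = min (dz y₁ y₂) (dz y₂ y₁))
    (hz₃ : z₃ = min (dz y₃ y₄) (dz y₄ y₃))
    (harc : (dz y₃ y₁ ≤ dz y₃ y₄ ∧ dz y₄ y₂ ≤ dz y₄ y₃) ∨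
            (dz y₃ y₂ ≤ dz y₃ y₄ ∧ dz y₄ y₁ ≤ dz y₄ y₃)) :
    16 * (((n / 2 : ℕ) : ℤ) * (((n - 1) / 2 : ℕ) : ℤ)) + (z₁ : ℤ) ^ 2 + ((n : ℤ) - z₁) ^ 2
        + (z₃ : ℤ) ^ 2 + ((n : ℤ) - z₃) ^ 2 - 2 * Δ n ≤
      4 * (fz y₁ y₃ + fz y₁ y₄ + fz y₂ y₃ + fz y₂ y₄) := by
  rcases harc with ⟨ha, hc⟩ | ⟨ha, hc⟩
  · exact key n hn y₁ y₂ y₃ y₄ h12 h13 h14 h23 h24 h34 z₁ z₃ hz₁ hz₃ ha hc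
  · have h := key n hn y₂ y₁ y₃ y₄ (Ne.symm h12) h23 h24 h13 h14 h34 z₁ z₃
      (by rw [hz₁, min_comm]) hz₃ ha hc
    linarith
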